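/- (Lemma E.4, orthogonal splitting of linearly independent vectors.) Suppose d ≥ 3n − 2 and x_1, …, x_n ∈ ℝ^d are linearly independent. Then there exist nonzero pairwise-orthogonal vectors v_1, …, v_n ∈ ℝ^d and vectors u_1, …, u_n ∈ ℝ^d such that x_i = v_i + u_i for every i, and ⟨v_i, u_j⟩ = 0 for all i, j ∈ {1, …, n}. -/

import Mathlib

open Module Matrix

theorem stmt_18 (n d : ℕ) (hn : 0 < n) (hd0 : 0 < d) (hd : 3 * n - 2 ≤ d)
    (x : Fin n → Fin d → ℝ) (hx : LinearIndependent ℝ x) :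
    ∃ (v u : Fin n → Fin d → ℝ),
      (∀ i, v i ≠ 0) ∧
      (∀ i j, i ≠ j → (∑ t, v i t * v j t) = 0) ∧
      (∀ i, x i = v i + u i) ∧
      (∀ i j, (∑ t, v i t * u j t) = 0) := by
  classical
  have key : ∀ a b : EuclideanSpace ℝ (Fin d), (∑ t, a t * b t) = inner ℝ a b := by
    intro a b
    simp [PiLp.inner_apply, RCLike.inner_apply, conj_trivial, mul_comm]
  by_cases hn1 : n = 1
  · subst hn1
    refine ⟨x, 0, fun i => hx.ne_zero i, ?_, fun i => by simp, fun i j => by simp⟩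
    intro i j hij
    exact absurd (Subsingleton.elim i j) hij
  have hn2 : 2 ≤ n := by omega
  set E := EuclideanSpace ℝ (Fin d) with hE
  let x' : Fin n → E := fun i => WithLp.toLp 2 (x i)
  have hx' : LinearIndependent ℝ x' :=
    hx.map' (WithLp.linearEquiv 2 ℝ (Fin d → ℝ)).symm.toLinearMap (LinearEquiv.ker _)
  let K : Submodule ℝ E := Submodule.span ℝ (Set.range x')
  have hKn : finrank ℝ K = n := by
    rw [finrank_span_eq_card hx', Fintype.card_fin]
  have hKorth : n ≤ finrank ℝ Kᗮ := by
    have h1 := Submodule.finrank_add_finrank_orthogonal K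
    rw [hKn, finrank_euclideanSpace_fin] at h1
    omega
  -- orthonormal family in Kᗮ
  let bO := stdOrthonormalBasis ℝ Kᗮ
  let f : Fin n → E := fun i => (bO (Fin.castLE hKorth i) : E)
  have hfK : ∀ i, f i ∈ Kᗮ := fun i => (bO (Fin.castLE hKorth i)).2
  have hf : ∀ i j, (inner ℝ (f i) (f j) : ℝ) = (if i = j then 1 else 0) := by
    intro i j
    have h1 := bO.orthonormal
    rw [orthonormal_iff_ite] at h1
    have h2 := h1 (Fin.castLE hKorth i) (Fin.castLE hKorth j)
    rw [Submodule.coe_inner] at h2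
    rw [h2]
    simp [Fin.castLE_inj]
  -- dual family in K
  let bK : Basis (Fin n) ℝ K := Module.Basis.span hx'
  let y : Fin n → K := fun i =>
    (InnerProductSpace.toDual ℝ K).symm (bK.dualBasis i).toContinuousLinearMap
  have hyx : ∀ i j, (inner ℝ ((y i : E)) (x' j) : ℝ) = (if i = j then 1 else 0) := by
    intro i j
    have h1 : (inner ℝ (y i) (bK j) : ℝ) = bK.dualBasis i (bK j) :=
      InnerProductSpace.toDual_symm_apply
    rw [Submodule.coe_inner, show ((bK j : K) : E) = x' j by rw [Module.Basis.span_apply]] at h1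
    rw [h1, Module.Basis.dualBasis_apply_self]
    simp [eq_comm]
  have hxK : ∀ j, x' j ∈ K := fun j => Submodule.subset_span ⟨j, rfl⟩
  have hyf : ∀ i j, (inner ℝ ((y i : E)) (f j) : ℝ) = 0 := fun i j =>
    Submodule.inner_right_of_mem_orthogonal (y i).2 (hfK j)
  have hfy : ∀ i j, (inner ℝ (f i) ((y j : E)) : ℝ) = 0 := fun i j => by
    rw [real_inner_comm]; exact hyf j i
  have hfx : ∀ i j, (inner ℝ (f i) (x' j) : ℝ) = 0 := fun i j => by
    rw [real_inner_comm]
    exact Submodule.inner_right_of_mem_orthogonal (hxK j) (hfK i)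
  -- the constant a
  set S : ℝ := ∑ i, ‖(y i : E)‖ ^ 2 with hSdef
  have hS : 0 ≤ S := Finset.sum_nonneg fun i _ => sq_nonneg _
  set a : ℝ := 1 / (1 + S) with hadef
  have ha : 0 < a := by positivity
  have haS : a * S ≤ 1 := by
    rw [hadef, div_mul_eq_mul_div, div_le_one (by positivity)]
    linarith
  -- the matrix M and its PSD-ness
  set C : Matrix (Fin n) (Fin n) ℝ := fun i j => (inner ℝ ((y i : E)) ((y j : E)) : ℝ) with hCdef
  set M : Matrix (Fin n) (Fin n) ℝ :=
    fun i j => a * (if i = j then 1 else 0) - a ^ 2 * C i j with hMdef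
  have hM : M.PosSemidef := by
    refine Matrix.PosSemidef.of_dotProduct_mulVec_nonneg ?_ ?_
    · ext i j
      rw [Matrix.conjTranspose_apply]
      simp only [Matrix.conjTranspose_apply, hMdef, hCdef, star_trivial]
      rw [real_inner_comm]
      congr 1
      simp [eq_comm]
    · intro c
      have hzz : ∀ z : E, (inner ℝ z z : ℝ) = ‖z‖ ^ 2 := fun z => real_inner_self_eq_norm_sq z
      set z : E := ∑ i, c i • (y i : E) with hzdef
      have hz : (inner ℝ z z : ℝ) = ∑ i, ∑ j, c i * c j * C i j := by
        rw [hzdef, sum_inner]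
        refine Finset.sum_congr rfl fun i _ => ?_
        rw [real_inner_smul_left, inner_sum, Finset.mul_sum]
        refine Finset.sum_congr rfl fun j _ => ?_
        rw [real_inner_smul_right]
        show c i * (c j * C i j) = _
        ring
      have expand : star c ⬝ᵥ M *ᵥ c
          = a * (∑ i, c i ^ 2) - a ^ 2 * (inner ℝ z z : ℝ) := by
        rw [hz]
        simp only [dotProduct, Matrix.mulVec, dotProduct, hMdef, star_trivial]
        rw [Finset.mul_sum, Finset.mul_sum, ← Finset.sum_sub_distrib]
        refine Finset.sum_congr rfl fun i _ => ?_
        have hptw : ∀ j, c i * (((a * if i = j then 1 else 0) - a ^ 2 * C i j) * c j)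
            = (if i = j then a * (c j * c j) else 0) - a ^ 2 * (c i * c j * C i j) := by
          intro j
          rcases eq_or_ne i j with h | h <;> simp [h] <;> ring
        rw [Finset.mul_sum, Finset.mul_sum]
        simp only [hptw]
        rw [Finset.sum_sub_distrib, Finset.sum_ite_eq]
        simp [pow_two]
      rw [expand]
      have hz_le : (inner ℝ z z : ℝ) ≤ (∑ i, c i ^ 2) * S := by
        rw [hzz z]
        have h1 : ‖z‖ ≤ ∑ i, |c i| * ‖(y i : E)‖ := by
          refine (norm_sum_le _ _).trans ?_
          refine Finset.sum_le_sum fun i _ => ?_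
          rw [norm_smul, Real.norm_eq_abs]
        have h2 : (∑ i, |c i| * ‖(y i : E)‖) ^ 2 ≤ (∑ i, |c i| ^ 2) * S := by
          rw [hSdef]
          exact Finset.sum_mul_sq_le_sq_mul_sq _ _ _
        calc ‖z‖ ^ 2 ≤ (∑ i, |c i| * ‖(y i : E)‖) ^ 2 := by
              apply sq_le_sq'
              · nlinarith [norm_nonneg z, Finset.sum_nonneg
                  (fun i (_ : i ∈ Finset.univ) => mul_nonneg (abs_nonneg (c i)) (norm_nonneg ((y i : E))))]
              · exact h1
          _ ≤ (∑ i, |c i| ^ 2) * S := h2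
          _ = (∑ i, c i ^ 2) * S := by simp [sq_abs]
      have hc2 : 0 ≤ ∑ i, c i ^ 2 := Finset.sum_nonneg fun i _ => sq_nonneg _
      nlinarith [mul_le_mul_of_nonneg_left hz_le (sq_nonneg a),
        mul_le_mul_of_nonneg_left haS (mul_nonneg ha.le hc2)]
  -- square root
  open scoped MatrixOrder in set B := CFC.sqrt M with hBdef
  have hBB : B * B = M := by
    open scoped MatrixOrder in exact CFC.sqrt_mul_sqrt_self M (Matrix.nonneg_iff_posSemidef.mpr hM)
  have hBsymm : ∀ i j, B i j = B j i := by
    intro i j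
    have h1 := (by open scoped MatrixOrder in exact (Matrix.nonneg_iff_posSemidef.mp (CFC.sqrt_nonneg M)).1 : B.IsHermitian)
    have := congrFun (congrFun h1 i) j
    simpa [Matrix.conjTranspose_apply] using this.symm
  -- the vectors
  set v : Fin n → E := fun i => a • (y i : E) + ∑ k, B k i • f k with hvdef
  set u : Fin n → E := fun i => x' i - v i with hudef
  have hvx : ∀ i j, (inner ℝ (v i) (x' j) : ℝ) = if i = j then a else 0 := by
    intro i j
    simp only [hvdef]
    rw [inner_add_left, real_inner_smul_left, hyx, sum_inner]
    simp_rw [real_inner_smul_left, hfx]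
    simp [mul_ite]
  have hvv : ∀ i j, (inner ℝ (v i) (v j) : ℝ) = if i = j then a else 0 := by
    intro i j
    simp only [hvdef]
    rw [inner_add_left, inner_add_right, inner_add_right, real_inner_smul_left,
      real_inner_smul_right, sum_inner, inner_sum]
    have t1 : ∀ k, (inner ℝ (a • (y i : E)) (B k j • f k) : ℝ) = 0 := by
      intro k; rw [real_inner_smul_left, real_inner_smul_right, hyf]; ring
    have t2 : ∀ k, (inner ℝ (B k i • f k) (a • (y j : E)) : ℝ) = 0 := by
      intro k; rw [real_inner_smul_left, real_inner_smul_right, hfy]; ring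
    have t3 : (inner ℝ (∑ k, B k i • f k) (∑ l, B l j • f l) : ℝ) = M i j := by
      rw [sum_inner, ← hBB]
      simp only [Matrix.mul_apply]
      refine Finset.sum_congr rfl fun k _ => ?_
      have hfk : (inner ℝ (f k) (∑ l, B l j • f l) : ℝ) = B k j := by
        rw [inner_sum]
        simp_rw [real_inner_smul_right, hf]
        simp [mul_ite]
      rw [real_inner_smul_left, hfk, hBsymm i k]
    simp only [t1, t2, t3, Finset.sum_const_zero, add_zero, zero_add, hMdef]
    rcases eq_or_ne i j with h | h <;> simp [h, hCdef] <;> ring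
  have hva : ∀ i, (inner ℝ (v i) (v i) : ℝ) = a := by intro i; rw [hvv]; simp
  refine ⟨fun i => (v i).ofLp, fun i => (u i).ofLp, ?_, ?_, ?_, ?_⟩
  · intro i hvi
    have h0 : v i = 0 := by simpa using hvi
    have := hva i
    rw [h0, inner_zero_left] at this
    exact absurd this.symm (ne_of_gt ha)
  · intro i j hij
    rw [key (v i) (v j), hvv]
    simp [hij]
  · intro i
    rw [hudef]
    simp [x']
    exact (add_sub_cancel (v i).ofLp (x i)).symm
  · intro i j
    rw [key (v i) (u j)]
    simp only [hudef]
    rw [inner_sub_right, hvx, hvv]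
    exact sub_self _
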